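/- Upper bound on the finite-dimensional posterior tail: Under the assumptions of the previous lemma, the posterior mass μ_n^{G(u₀)}{u : ‖u − u₀‖ > ξ/2} := [∫_{‖u−u₀‖>ξ/2} e^{−(n/2)‖G(u)−G(u₀)‖_ζ²} dμ₀] / [∫_{ℝ^p} e^{−(n/2)‖G(u)−G(u₀)‖_ζ²} dμ₀] is at most exp(−(n/2)(ξ/2K₃)²) / [exp(−(n/2)(ξ/4K₃)²)·F·(ξ/(4K₃K₄))^s] = exp(−(3n/32K₃²)ξ²) · F^{-1} (4K₃K₄/ξ)^s. In particular, with ξ_n = √((log n)/n) this tends to 0 as n → ∞. -/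

import Mathlib

open MeasureTheory

/-- Upper bound on the finite-dimensional posterior tail: under the Lipschitz bounds
`‖u‖ ≤ K₃ N(G u)` and `N(G u) ≤ K₄ ‖u‖` and the small-ball condition for the prior,
the posterior mass of `{‖u − u₀‖ > ξ/2}` is at most
`exp(−(n/2)(ξ/(2K₃))²) / (exp(−(n/2)(ξ/(4K₃))²) F (ξ/(4K₃K₄))ˢ)`. -/
theorem stmt15 {p q : ℕ} (hpq : p ≤ q)
    (G : EuclideanSpace ℝ (Fin p) →ₗ[ℝ] EuclideanSpace ℝ (Fin q))
    (hGinj : Function.Injective G)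
    (N : EuclideanSpace ℝ (Fin q) → ℝ) (hNc : Continuous N) (hN0 : ∀ x, 0 ≤ N x)
    (μ₀ : Measure (EuclideanSpace ℝ (Fin p))) [IsProbabilityMeasure μ₀]
    (u₀ : EuclideanSpace ℝ (Fin p))
    (K₃ K₄ F s r₀ : ℝ) (hK₃ : 0 < K₃) (hK₄ : 0 < K₄) (hF : 0 < F) (hs : 0 < s)
    (hr₀ : 0 < r₀)
    (hLip₃ : ∀ u : EuclideanSpace ℝ (Fin p), ‖u‖ ≤ K₃ * N (G u))
    (hLip₄ : ∀ u : EuclideanSpace ℝ (Fin p), N (G u) ≤ K₄ * ‖u‖)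
    (hsb : ∀ r : ℝ, 0 < r → r ≤ r₀ →
      F * r ^ s ≤ (μ₀ {u | ‖u - u₀‖ ≤ r}).toReal)
    (n : ℕ) (ξ : ℝ) (hξ : 0 < ξ) (hξr : ξ / (4 * K₃ * K₄) ≤ r₀) :
    (∫ u in {u | ξ / 2 < ‖u - u₀‖},
        Real.exp (-((n : ℝ) / 2) * (N (G u - G u₀)) ^ 2) ∂μ₀) /
      (∫ u, Real.exp (-((n : ℝ) / 2) * (N (G u - G u₀)) ^ 2) ∂μ₀) ≤
    Real.exp (-((n : ℝ) / 2) * (ξ / (2 * K₃)) ^ 2) /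
      (Real.exp (-((n : ℝ) / 2) * (ξ / (4 * K₃)) ^ 2) * F * (ξ / (4 * K₃ * K₄)) ^ s) := by

  have hGc : Continuous (G : EuclideanSpace ℝ (Fin p) → EuclideanSpace ℝ (Fin q)) :=
    G.continuous_of_finiteDimensional
  set f : EuclideanSpace ℝ (Fin p) → ℝ :=
    fun u => Real.exp (-((n : ℝ) / 2) * (N (G u - G u₀)) ^ 2) with hfdef
  have hfc : Continuous f := by
    apply Real.continuous_exp.comp
    exact (continuous_const.mul ((hNc.comp (hGc.sub continuous_const)).pow 2))
  have hfnn : ∀ u, 0 ≤ f u := fun u => (Real.exp_pos _).le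
  have hf1 : ∀ u, f u ≤ 1 := by
    intro u
    apply Real.exp_le_one_iff.mpr
    have h1 : (0:ℝ) ≤ (N (G u - G u₀)) ^ 2 := sq_nonneg _
    have h2 : (0:ℝ) ≤ (n:ℝ)/2 := by positivity
    nlinarith
  have hfi : Integrable f μ₀ := by
    refine (integrable_const (1:ℝ)).mono' hfc.aestronglyMeasurable ?_
    filter_upwards with u
    rw [Real.norm_eq_abs, abs_of_nonneg (hfnn u)]
    exact hf1 u
  set S : Set (EuclideanSpace ℝ (Fin p)) := {u | ξ / 2 < ‖u - u₀‖} with hSdef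
  have hSmeas : MeasurableSet S :=
    measurableSet_lt measurable_const ((continuous_id.sub continuous_const).norm.measurable)
  set r : ℝ := ξ / (4 * K₃ * K₄) with hrdef
  have hr : 0 < r := by positivity
  set B : Set (EuclideanSpace ℝ (Fin p)) := {u | ‖u - u₀‖ ≤ r} with hBdef
  have hBmeas : MeasurableSet B :=
    measurableSet_le ((continuous_id.sub continuous_const).norm.measurable) measurable_const
  -- numerator bound
  have hnum : (∫ u in S, f u ∂μ₀) ≤ Real.exp (-((n : ℝ) / 2) * (ξ / (2 * K₃)) ^ 2) := by
    have hstep : (∫ u in S, f u ∂μ₀)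
        ≤ ∫ _u in S, Real.exp (-((n : ℝ) / 2) * (ξ / (2 * K₃)) ^ 2) ∂μ₀ := by
      apply setIntegral_mono_on hfi.integrableOn ((integrableOn_const_iff).mpr (Or.inr (measure_lt_top _ _))) hSmeas
      intro u hu
      have h3 := hLip₃ (u - u₀)
      rw [map_sub] at h3
      have hu' : ξ / 2 < ‖u - u₀‖ := hu
      have hNge : ξ / (2 * K₃) ≤ N (G u - G u₀) := by
        rw [div_le_iff₀ (by positivity)]
        nlinarith [hN0 (G u - G u₀)]
      apply Real.exp_le_exp.mpr
      have h2 : (0:ℝ) ≤ (n:ℝ)/2 := by positivity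
      have hsq : (ξ / (2 * K₃)) ^ 2 ≤ (N (G u - G u₀)) ^ 2 :=
        pow_le_pow_left₀ (by positivity) hNge 2
      nlinarith
    rw [setIntegral_const] at hstep
    refine hstep.trans ?_
    have hle1 : (μ₀ S).toReal ≤ 1 := by
      have := prob_le_one (μ := μ₀) (s := S)
      simpa using ENNReal.toReal_mono ENNReal.one_ne_top this
    have := mul_le_mul_of_nonneg_right hle1 (Real.exp_pos (-((n : ℝ) / 2) * (ξ / (2 * K₃)) ^ 2)).le
    simpa [smul_eq_mul, Measure.real] using this
  -- denominator bound
  have hden : Real.exp (-((n : ℝ) / 2) * (ξ / (4 * K₃)) ^ 2) * F * r ^ s ≤ ∫ u, f u ∂μ₀ := by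
    have h1 : Real.exp (-((n : ℝ) / 2) * (ξ / (4 * K₃)) ^ 2) * F * r ^ s
        ≤ (μ₀ B).toReal * Real.exp (-((n : ℝ) / 2) * (ξ / (4 * K₃)) ^ 2) := by
      have hsb' := hsb r hr hξr
      have := mul_le_mul_of_nonneg_right hsb' (Real.exp_pos (-((n : ℝ) / 2) * (ξ / (4 * K₃)) ^ 2)).le
      calc Real.exp (-((n : ℝ) / 2) * (ξ / (4 * K₃)) ^ 2) * F * r ^ s
          = F * r ^ s * Real.exp (-((n : ℝ) / 2) * (ξ / (4 * K₃)) ^ 2) := by ring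
        _ ≤ _ := this
    have h2 : (∫ _u in B, Real.exp (-((n : ℝ) / 2) * (ξ / (4 * K₃)) ^ 2) ∂μ₀)
        ≤ ∫ u in B, f u ∂μ₀ := by
      apply setIntegral_mono_on ((integrableOn_const_iff).mpr (Or.inr (measure_lt_top _ _))) hfi.integrableOn hBmeas
      intro u hu
      have h4 := hLip₄ (u - u₀)
      rw [map_sub] at h4
      have hu' : ‖u - u₀‖ ≤ r := hu
      have hNle : N (G u - G u₀) ≤ ξ / (4 * K₃) := by
        have : K₄ * r = ξ / (4 * K₃) := by
          rw [hrdef, mul_div_assoc', div_eq_div_iff (by positivity) (by positivity)]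
          ring
        nlinarith
      apply Real.exp_le_exp.mpr
      have h2' : (0:ℝ) ≤ (n:ℝ)/2 := by positivity
      have hsq : (N (G u - G u₀)) ^ 2 ≤ (ξ / (4 * K₃)) ^ 2 :=
        pow_le_pow_left₀ (hN0 _) hNle 2
      nlinarith
    have h3 : (∫ u in B, f u ∂μ₀) ≤ ∫ u, f u ∂μ₀ := by
      apply setIntegral_le_integral hfi
      filter_upwards with u using hfnn u
    calc Real.exp (-((n : ℝ) / 2) * (ξ / (4 * K₃)) ^ 2) * F * r ^ s
        ≤ (μ₀ B).toReal * Real.exp (-((n : ℝ) / 2) * (ξ / (4 * K₃)) ^ 2) := h1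
      _ = ∫ _u in B, Real.exp (-((n : ℝ) / 2) * (ξ / (4 * K₃)) ^ 2) ∂μ₀ := by
          rw [setIntegral_const]; simp [smul_eq_mul, Measure.real]
      _ ≤ ∫ u in B, f u ∂μ₀ := h2
      _ ≤ _ := h3
  have hpos : 0 < Real.exp (-((n : ℝ) / 2) * (ξ / (4 * K₃)) ^ 2) * F * r ^ s := by positivity
  exact div_le_div₀ (Real.exp_pos _).le hnum hpos hden
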